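/- The relation →q is transitive: for finite simple graphs X, Y, Z, if there is a quantum homomorphism from X to Y and a quantum homomorphism from Y to Z, then there is a quantum homomorphism from X to Z. -/

import Mathlib

open Matrix Finset Kronecker

/-- A quantum homomorphism from `X` to `Y`: for some `d ≥ 1` there are complex `d × d`
projectors `E x y` (Hermitian idempotents) with `∑ y, E x y = 1` for every `x`,
`E x y * E x y' = 0` whenever `y ≠ y'`, and `E x y * E x' y' = 0` whenever `x, x'`
are adjacent in `X` and `y, y'` are equal or nonadjacent in `Y`. -/
def IsQuantumHom {V W : Type} [Fintype V] [Fintype W]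
    (X : SimpleGraph V) (Y : SimpleGraph W) : Prop :=
  ∃ d : ℕ, 0 < d ∧ ∃ E : V → W → Matrix (Fin d) (Fin d) ℂ,
    (∀ x y, (E x y).IsHermitian ∧ E x y * E x y = E x y) ∧
    (∀ x, ∑ y, E x y = 1) ∧
    (∀ x y y', y ≠ y' → E x y * E x y' = 0) ∧
    (∀ x x' y y', X.Adj x x' → ¬ Y.Adj y y' → E x y * E x' y' = 0)

lemma conjTranspose_kron {m n : Type*} (A : Matrix m m ℂ) (B : Matrix n n ℂ) :
    (A ⊗ₖ B)ᴴ = Aᴴ ⊗ₖ Bᴴ := by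
  ext ⟨i, j⟩ ⟨k, l⟩
  simp [conjTranspose_apply, kroneckerMap_apply, mul_comm]

/-- Quantum homomorphism is transitive. -/
theorem isQuantumHom_trans {U V W : Type} [Fintype U] [Fintype V] [Fintype W]
    (X : SimpleGraph U) (Y : SimpleGraph V) (Z : SimpleGraph W)
    (hXY : IsQuantumHom X Y) (hYZ : IsQuantumHom Y Z) :
    IsQuantumHom X Z := by
  classical
  obtain ⟨d1, hd1, E, hE1, hE2, hE3, hE4⟩ := hXY
  obtain ⟨d2, hd2, F, hF1, hF2, hF3, hF4⟩ := hYZ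
  -- work on product indices
  set G : U → W → Matrix (Fin d1 × Fin d2) (Fin d1 × Fin d2) ℂ :=
    fun x z => ∑ y, E x y ⊗ₖ F y z with hG
  have key : ∀ (x x' : U) (z z' : W),
      G x z * G x' z' = ∑ y, ∑ y', (E x y * E x' y') ⊗ₖ (F y z * F y' z') := by
    intro x x' z z'
    rw [hG]
    simp only [Finset.sum_mul_sum, mul_kronecker_mul]
  have hGH : ∀ x z, (G x z).IsHermitian := by
    intro x z
    unfold Matrix.IsHermitian
    rw [hG]
    simp only [conjTranspose_sum, conjTranspose_kron]
    refine Finset.sum_congr rfl fun y _ => ?_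
    rw [(hE1 x y).1, (hF1 y z).1]
  have hGidem : ∀ x z, G x z * G x z = G x z := by
    intro x z
    rw [key]
    rw [hG]
    refine Finset.sum_congr rfl fun y _ => ?_
    rw [Finset.sum_eq_single y]
    · rw [(hE1 x y).2, (hF1 y z).2]
    · intro y' _ hy'
      rw [hE3 x y y' (Ne.symm hy'), zero_kronecker]
    · simp
  have hGsum : ∀ x, ∑ z, G x z = 1 := by
    intro x
    rw [hG]
    simp only
    rw [Finset.sum_comm]
    have : ∀ y : V, ∑ z, E x y ⊗ₖ F y z = E x y ⊗ₖ (1 : Matrix (Fin d2) (Fin d2) ℂ) := by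
      intro y
      rw [← hF2 y]
      induction (Finset.univ : Finset W) using Finset.induction with
      | empty => simp
      | insert _ _ h ih => simp [Finset.sum_insert h, kronecker_add, ih]
    simp only [this]
    have : ∑ y, E x y ⊗ₖ (1 : Matrix (Fin d2) (Fin d2) ℂ) =
        (∑ y, E x y) ⊗ₖ (1 : Matrix (Fin d2) (Fin d2) ℂ) := by
      induction (Finset.univ : Finset V) using Finset.induction with
      | empty => simp
      | insert _ _ h ih => simp [Finset.sum_insert h, add_kronecker, ih]
    rw [this, hE2, one_kronecker_one]
  have hGorth : ∀ x z z', z ≠ z' → G x z * G x z' = 0 := by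
    intro x z z' hzz'
    rw [key]
    refine Finset.sum_eq_zero fun y _ => Finset.sum_eq_zero fun y' _ => ?_
    by_cases h : y = y'
    · subst h
      rw [hF3 y z z' hzz', kronecker_zero]
    · rw [hE3 x y y' h, zero_kronecker]
  have hGadj : ∀ x x' z z', X.Adj x x' → ¬ Z.Adj z z' → G x z * G x' z' = 0 := by
    intro x x' z z' hadj hnadj
    rw [key]
    refine Finset.sum_eq_zero fun y _ => Finset.sum_eq_zero fun y' _ => ?_
    by_cases h : Y.Adj y y'
    · rw [hF4 y y' z z' h hnadj, kronecker_zero]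
    · rw [hE4 x x' y y' hadj h, zero_kronecker]
  -- transfer to Fin (d1 * d2)
  refine ⟨d1 * d2, Nat.mul_pos hd1 hd2,
    fun x z => Matrix.reindexAlgEquiv ℂ ℂ finProdFinEquiv (G x z), ?_, ?_, ?_, ?_⟩
  · intro x z
    refine ⟨(hGH x z).submatrix _, ?_⟩
    rw [← _root_.map_mul, hGidem]
  · intro x
    rw [← map_sum, hGsum, _root_.map_one]
  · intro x z z' h
    rw [← _root_.map_mul, hGorth x z z' h, _root_.map_zero]
  · intro x x' z z' h1 h2
    rw [← _root_.map_mul, hGadj x x' z z' h1 h2, _root_.map_zero]
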